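/- The set of autocorrelations of probability measures on the circle is not convex: there exists N ∈ ℕ such that for every integer n ≥ N, there is no probability measure ρ on 𝕋 = ℝ/ℤ whose autocorrelation F_ρ equals the measure with density g_n(x) = 1 + (1/4)cos(2πx) + (1/4)cos(2πnx) with respect to Haar measure. (Note that g_n·Haar is the convex combination, with weight 1/2 each, of the autocorrelations of the probability densities 1 + cos(2πx) and 1 + cos(2πnx).) (Remark 3.2.) -/

import Mathlib

open MeasureTheory Real
open scoped ENNReal

theorem cos2pi_periodic : Function.Periodic (fun t : ℝ => Real.cos (2 * Real.pi * t)) 1 := by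
  intro x; simp [mul_add, Real.cos_add_two_pi]

theorem sin2pi_periodic : Function.Periodic (fun t : ℝ => Real.sin (2 * Real.pi * t)) 1 := by
  intro x; simp [mul_add, Real.sin_add_two_pi]

/-- The function `x ↦ cos (2π x)` on the circle `ℝ/ℤ`. -/
noncomputable def cosA : AddCircle (1 : ℝ) → ℝ := cos2pi_periodic.lift

/-- The function `x ↦ sin (2π x)` on the circle `ℝ/ℤ`. -/
noncomputable def sinA : AddCircle (1 : ℝ) → ℝ := sin2pi_periodic.lift

/-- The `d`-dimensional torus `𝕋^d = ℝ^d/ℤ^d`, with its Haar probability measure `volume`. -/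
abbrev Torus (d : ℕ) := Fin d → AddCircle (1 : ℝ)

/-- `cos (2π k·x)` for `k ∈ ℤ^d` and `x ∈ 𝕋^d`. -/
noncomputable def tcos {d : ℕ} (k : Fin d → ℤ) (x : Torus d) : ℝ := cosA (∑ i, k i • x i)

/-- `sin (2π k·x)` for `k ∈ ℤ^d` and `x ∈ 𝕋^d`. -/
noncomputable def tsin {d : ℕ} (k : Fin d → ℤ) (x : Torus d) : ℝ := sinA (∑ i, k i • x i)

/-- `cos (2π k x)` on the circle `𝕋 = ℝ/ℤ`. -/
noncomputable def cosC (k : ℤ) (x : AddCircle (1 : ℝ)) : ℝ := cosA (k • x)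

/-- `sin (2π k x)` on the circle `𝕋 = ℝ/ℤ`. -/
noncomputable def sinC (k : ℤ) (x : AddCircle (1 : ℝ)) : ℝ := sinA (k • x)

/-- The autocorrelation of a measure `ρ` on the circle `𝕋`: the pushforward of `ρ × ρ`
under `(x, y) ↦ x - y`. -/
noncomputable def autocorrC (ρ : Measure (AddCircle (1 : ℝ))) : Measure (AddCircle (1 : ℝ)) :=
  (ρ.prod ρ).map (fun p => p.1 - p.2)

/-! ### Auxiliary lemmas -/

lemma cosA_coe (t : ℝ) : cosA (t : AddCircle (1:ℝ)) = Real.cos (2 * Real.pi * t) :=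
  cos2pi_periodic.lift_coe t

lemma continuous_cosA : Continuous cosA := continuous_quot_lift _ (by continuity)

lemma continuous_cosC (k : ℤ) : Continuous (cosC k) :=
  continuous_cosA.comp (continuous_zsmul k)

lemma cosC_eq (k : ℤ) (x : AddCircle (1:ℝ)) :
    (cosC k x : ℂ) = (fourier k x + fourier (-k) x) / 2 := by
  induction x using QuotientAddGroup.induction_on with
  | H t =>
    have h1 : (k • (t : AddCircle (1:ℝ))) = ((k * t : ℝ) : AddCircle (1:ℝ)) := by
      rw [← QuotientAddGroup.mk_zsmul]; norm_num [zsmul_eq_mul]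
    rw [cosC, h1, cosA_coe, fourier_coe_apply, fourier_coe_apply]
    push_cast
    have e1 : (2 * ↑π * Complex.I * ↑k * ↑t / 1 : ℂ) = (2 * ↑π * (↑k * ↑t)) * Complex.I := by ring
    have e2 : (2 * ↑π * Complex.I * -↑k * ↑t / 1 : ℂ) = -(2 * ↑π * (↑k * ↑t)) * Complex.I := by
      ring
    rw [e1, e2, ← Complex.cos_add_sin_I, ← Complex.cos_sub_sin_I]
    ring

lemma abs_cosA_le (x : AddCircle (1:ℝ)) : |cosA x| ≤ 1 := by
  induction x using QuotientAddGroup.induction_on with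
  | H t => rw [cosA_coe]; exact abs_cos_le_one _

lemma abs_cosC_le (k : ℤ) (x : AddCircle (1:ℝ)) : |cosC k x| ≤ 1 := abs_cosA_le _

lemma intf (μ : Measure (AddCircle (1:ℝ))) [IsFiniteMeasure μ] (k : ℤ) :
    Integrable (fun x => (fourier k x : ℂ)) μ :=
  (map_continuous (fourier k)).integrable_of_hasCompactSupport
    (HasCompactSupport.of_compactSpace _)

lemma integral_fourier_circle (k : ℤ) :
    ∫ x : AddCircle (1:ℝ), fourier k x ∂volume = if k = 0 then 1 else 0 := by
  have hvol : (volume : Measure (AddCircle (1:ℝ))) = AddCircle.haarAddCircle := by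
    rw [AddCircle.volume_eq_smul_haarAddCircle]; simp
  rw [hvol]
  split_ifs with h
  · subst h
    have : ⇑(fourier 0 : C(AddCircle (1:ℝ), ℂ)) = fun _ => 1 := by ext1 x; exact fourier_zero
    rw [this, integral_const]; simp
  · haveI : Fact ((0:ℝ) < 1) := ⟨one_pos⟩
    exact integral_eq_zero_of_add_right_eq_neg (fourier_add_half_inv_index h one_pos)

lemma integral_g_mul_fourier (n : ℤ) (k : ℤ) :
    ∫ x : AddCircle (1:ℝ),
      (↑(1 + (1/4) * cosC 1 x + (1/4) * cosC n x) : ℂ) * fourier k x ∂volume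
    = (if k = 0 then 1 else 0) + (1/8) * ((if 1+k = 0 then 1 else 0) + (if -1+k = 0 then 1 else 0))
      + (1/8) * ((if n+k = 0 then 1 else 0) + (if -n+k = 0 then 1 else 0)) := by
  have h : ∀ x : AddCircle (1:ℝ),
      (↑(1 + (1/4) * cosC 1 x + (1/4) * cosC n x) : ℂ) * fourier k x
      = fourier k x + (1/8) * (fourier (1+k) x + fourier (-1+k) x)
        + (1/8) * (fourier (n+k) x + fourier (-n+k) x) := by
    intro x
    push_cast
    rw [cosC_eq, cosC_eq, fourier_add, fourier_add, fourier_add, fourier_add]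
    ring
  simp only [h]
  rw [integral_add, integral_add, integral_const_mul, integral_const_mul,
    integral_add (intf _ _) (intf _ _), integral_add (intf _ _) (intf _ _),
    integral_fourier_circle, integral_fourier_circle, integral_fourier_circle,
    integral_fourier_circle, integral_fourier_circle]
  · exact intf _ _
  · exact (((intf _ (1+k)).add (intf _ (-1+k))).const_mul _)
  · exact ((intf _ k).add ((((intf _ (1+k)).add (intf _ (-1+k))).const_mul _)))
  · exact (((intf _ (n+k)).add (intf _ (-n+k))).const_mul _)

lemma fourier_sub_split (k : ℤ) (x y : AddCircle (1:ℝ)) :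
    fourier k (x - y) = fourier k x * fourier (-k) y := by
  have h : k • (x - y) = k • x + (-k) • y := by
    rw [sub_eq_add_neg, smul_add, smul_neg, neg_smul]
  rw [fourier_apply, fourier_apply, fourier_apply, h, AddCircle.toCircle_add]
  simp

lemma coeff_autocorr (ρ : Measure (AddCircle (1:ℝ))) [IsProbabilityMeasure ρ] (k : ℤ) :
    ∫ x, fourier k x ∂(autocorrC ρ)
      = (∫ x, fourier k x ∂ρ) * (∫ x, fourier (-k) x ∂ρ) := by
  rw [autocorrC, integral_map (by fun_prop)
    (Continuous.aestronglyMeasurable (map_continuous (fourier k)))]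
  simp_rw [fourier_sub_split k]
  exact integral_prod_mul _ _

lemma coeff_neg (ρ : Measure (AddCircle (1:ℝ))) (k : ℤ) :
    ∫ x, fourier (-k) x ∂ρ = starRingEnd ℂ (∫ x, fourier k x ∂ρ) := by
  rw [← integral_conj]
  simp_rw [fourier_neg]

lemma integral_withDensity_ofReal {g : AddCircle (1:ℝ) → ℝ} (hg : Continuous g)
    (hg0 : ∀ x, 0 ≤ g x) (k : ℤ) :
    ∫ x, fourier k x ∂(volume.withDensity (fun x => ENNReal.ofReal (g x)))
      = ∫ x, (g x : ℂ) * fourier k x ∂volume := by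
  have : (fun x => ENNReal.ofReal (g x)) = (fun x => ((fun x => (g x).toNNReal) x : ℝ≥0∞)) := rfl
  rw [this, integral_withDensity_eq_integral_smul (by fun_prop)]
  congr 1; ext x
  rw [NNReal.smul_def, Real.coe_toNNReal _ (hg0 x), Complex.real_smul]

lemma count_pos (m e : ℕ) (he : e ≤ m) (v : ℂ) :
    ∑ l ∈ Finset.range m, ∑ j ∈ Finset.range m,
      (if (j:ℤ) - (l:ℤ) = (e:ℤ) then v else 0) = (m - e : ℕ) • v := by
  have h1 : ∀ l ∈ Finset.range m, ∑ j ∈ Finset.range m,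
      (if (j:ℤ) - (l:ℤ) = (e:ℤ) then v else 0)
      = if l ∈ Finset.range (m - e) then v else 0 := by
    intro l _
    have : ∀ j : ℕ, ((j:ℤ) - (l:ℤ) = (e:ℤ)) ↔ j = l + e := by intro j; omega
    simp_rw [this]
    rw [Finset.sum_ite_eq' (Finset.range m) (l + e) (fun _ => v)]
    congr 1
    simp only [Finset.mem_range, eq_iff_iff]
    omega
  rw [Finset.sum_congr rfl h1, Finset.sum_ite_mem]
  have : Finset.range m ∩ Finset.range (m - e) = Finset.range (m - e) := by
    apply Finset.inter_eq_right.mpr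
    exact Finset.range_subset_range.mpr (by omega)
  rw [this, Finset.sum_const, Finset.card_range]

lemma count_neg (m e : ℕ) (he : e ≤ m) (v : ℂ) :
    ∑ l ∈ Finset.range m, ∑ j ∈ Finset.range m,
      (if (j:ℤ) - (l:ℤ) = -(e:ℤ) then v else 0) = (m - e : ℕ) • v := by
  rw [Finset.sum_comm]
  have h1 : ∀ j : ℕ, ∀ l : ℕ, ((j:ℤ) - (l:ℤ) = -(e:ℤ)) ↔ ((l:ℤ) - (j:ℤ) = (e:ℤ)) := by
    intro j l; omega
  simp_rw [h1]
  exact count_pos m e he v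

lemma double_sum_support (n : ℕ) (hn : 2 ≤ n) (m : ℕ) (hm : n ≤ m) (h : ℤ → ℂ)
    (hs : ∀ d : ℤ, d ≠ 0 → d ≠ 1 → d ≠ -1 → d ≠ (n:ℤ) → d ≠ -(n:ℤ) → h d = 0) :
    ∑ l ∈ Finset.range m, ∑ j ∈ Finset.range m, h ((j:ℤ) - l)
      = (m:ℕ) • h 0 + (m-1 : ℕ) • (h 1 + h (-1)) + (m - n : ℕ) • (h (n:ℤ) + h (-(n:ℤ))) := by
  classical
  set D : Finset ℤ := insert 0 (insert 1 (insert (-1) (insert (n:ℤ) {-(n:ℤ)}))) with hD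
  have step1 : ∑ l ∈ Finset.range m, ∑ j ∈ Finset.range m, h ((j:ℤ) - l)
      = ∑ l ∈ Finset.range m, ∑ j ∈ Finset.range m, ∑ d ∈ D,
          (if (j:ℤ) - (l:ℤ) = d then h d else 0) := by
    refine Finset.sum_congr rfl fun l _ => Finset.sum_congr rfl fun j _ => ?_
    rw [Finset.sum_ite_eq D ((j:ℤ) - l) h]
    by_cases hmem : ((j:ℤ) - l) ∈ D
    · simp [hmem]
    · simp only [hmem, if_false]
      simp only [hD, Finset.mem_insert, Finset.mem_singleton, not_or] at hmem
      exact hs _ hmem.1 hmem.2.1 hmem.2.2.1 hmem.2.2.2.1 hmem.2.2.2.2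
  rw [step1]
  have step2 : ∑ l ∈ Finset.range m, ∑ j ∈ Finset.range m, ∑ d ∈ D,
          (if (j:ℤ) - (l:ℤ) = d then h d else 0)
      = ∑ d ∈ D, ∑ l ∈ Finset.range m, ∑ j ∈ Finset.range m,
          (if (j:ℤ) - (l:ℤ) = d then h d else 0) := by
    have inner : ∀ l : ℕ, l ∈ Finset.range m →
        ∑ j ∈ Finset.range m, ∑ d ∈ D, (if (j:ℤ) - (l:ℤ) = d then h d else 0)
        = ∑ d ∈ D, ∑ j ∈ Finset.range m, (if (j:ℤ) - (l:ℤ) = d then h d else 0) :=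
      fun l _ => Finset.sum_comm
    rw [Finset.sum_congr rfl inner, Finset.sum_comm]
  rw [step2, hD]
  rw [Finset.sum_insert (by simp; omega), Finset.sum_insert (by simp; omega),
    Finset.sum_insert (by simp; omega), Finset.sum_insert (by simp; omega),
    Finset.sum_singleton]
  have c0 := count_pos m 0 (by omega) (h 0)
  have c1 := count_pos m 1 (by omega) (h 1)
  have c1' := count_neg m 1 (by omega) (h (-1))
  have cn := count_pos m n (by omega) (h (n:ℤ))
  have cn' := count_neg m n (by omega) (h (-(n:ℤ)))
  simp only [Nat.cast_zero, Nat.cast_one] at c0 c1 c1' cn cn'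
  rw [c0, c1, c1', cn, cn']
  simp only [Nat.sub_zero, smul_add]
  ring

lemma arith_dsq (nr δ : ℝ) (hn0 : 0 < nr) (hδb : |δ| ≤ 1/(2*nr)) :
    (2*Real.pi*δ)^2 ≤ 10/nr^2 := by
  have hπ2 : Real.pi^2 < 10 := by nlinarith [Real.pi_lt_d2, Real.pi_pos]
  have hδ2 : δ^2 ≤ 1/(4*nr^2) := by
    have h1 : |δ|^2 ≤ (1/(2*nr))^2 := by
      apply pow_le_pow_left₀ (abs_nonneg δ) hδb
    rw [sq_abs] at h1
    calc δ^2 ≤ (1/(2*nr))^2 := h1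
      _ = 1/(4*nr^2) := by ring
  rw [le_div_iff₀ (by positivity)] at hδ2 ⊢
  nlinarith [mul_le_mul hπ2.le hδ2 (by positivity) (by norm_num : (0:ℝ) ≤ 10),
    sq_nonneg (π*δ*nr)]

lemma arith_final (nr A B r1 rn I : ℝ) (hnr : 10 ≤ nr) (hA2 : A^2 = 1/8) (hB2 : B^2 = 1/8)
    (hA0 : 0 ≤ A) (hB0 : 0 ≤ B) (hr1 : r1 ≤ A * (-(1 - 5/nr^2))) (hrn : rn = -B)
    (hI : 0 ≤ I) (hIeq : I = nr^2 + (nr^2-1)*(2*r1) + (nr^2-nr)*(2*rn)) : False := by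
  have hn0 : (0:ℝ) < nr := by linarith
  have hA035 : (7/20 : ℝ) ≤ A := by nlinarith
  have hB035 : (7/20 : ℝ) ≤ B := by nlinarith
  have hfive : 5/nr^2 ≤ 1/20 := by
    rw [div_le_div_iff₀ (by positivity) (by norm_num)]
    nlinarith
  have hAle : A ≤ 2/5 := by nlinarith
  have hu : A * (-(1 - 5/nr^2)) ≤ -(133/400) := by nlinarith
  have hr1' : r1 ≤ -(133/400) := le_trans hr1 hu
  have hcoef1 : (0:ℝ) ≤ nr^2 - 1 := by nlinarith
  have hcoef2 : (0:ℝ) ≤ nr^2 - nr := by nlinarith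
  nlinarith [mul_le_mul_of_nonneg_left hr1' hcoef1,
    mul_le_mul_of_nonneg_left hB035 hcoef2]

/-- Remark 3.2: the set of autocorrelations of probability measures on the circle is not
convex: for all sufficiently large `n`, the measure with density
`1 + (1/4)cos(2πx) + (1/4)cos(2πnx)` (a convex combination of autocorrelations) is not the
autocorrelation of any probability measure. -/
theorem stmt2 : ∃ N : ℕ, ∀ n : ℕ, N ≤ n →
    ¬ ∃ ρ : Measure (AddCircle (1 : ℝ)), IsProbabilityMeasure ρ ∧
        autocorrC ρ = volume.withDensity
          (fun x => ENNReal.ofReal (1 + (1/4) * cosC 1 x + (1/4) * cosC (n : ℤ) x)) := by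
  refine ⟨10, fun n hn => ?_⟩
  rintro ⟨ρ, hρ, heq⟩
  haveI := hρ
  set g : AddCircle (1:ℝ) → ℝ := fun x => 1 + (1/4) * cosC 1 x + (1/4) * cosC (n:ℤ) x with hgdef
  have hgc : Continuous g :=
    (continuous_const.add (continuous_const.mul (continuous_cosC 1))).add
      (continuous_const.mul (continuous_cosC (n:ℤ)))
  have hg0 : ∀ x, 0 ≤ g x := by
    intro x
    have h1 := abs_cosC_le 1 x
    have h2 := abs_cosC_le (n:ℤ) x
    rw [abs_le] at h1 h2
    simp only [hgdef]
    linarith [h1.1, h2.1]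
  set c : ℤ → ℂ := fun k => ∫ x, fourier k x ∂ρ with hcdef
  have key : ∀ k : ℤ, c k * (starRingEnd ℂ) (c k)
      = (if k = 0 then 1 else 0)
        + (1/8) * ((if 1+k = 0 then 1 else 0) + (if -1+k = 0 then 1 else 0))
        + (1/8) * ((if (n:ℤ)+k = 0 then 1 else 0) + (if -(n:ℤ)+k = 0 then 1 else 0)) := by
    intro k
    have h1 : ∫ x, fourier k x ∂(autocorrC ρ)
        = ∫ x, fourier k x ∂(volume.withDensity fun x => ENNReal.ofReal (g x)) := by rw [heq]
    rwa [coeff_autocorr ρ k, coeff_neg, integral_withDensity_ofReal hgc hg0,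
      integral_g_mul_fourier] at h1
  have hc0 : c 0 = 1 := by
    have : (fun x : AddCircle (1:ℝ) => (fourier 0 x : ℂ)) = fun _ => 1 :=
      funext fun x => fourier_zero
    simp only [hcdef, this, integral_const, measure_univ]
    simp
  have hA2 : Complex.normSq (c 1) = 1/8 := by
    have := key 1
    rw [Complex.mul_conj] at this
    have hifs : ((if (1:ℤ) = 0 then (1:ℂ) else 0)
        + (1/8) * ((if 1+(1:ℤ) = 0 then 1 else 0) + (if -1+(1:ℤ) = 0 then 1 else 0))
        + (1/8) * ((if (n:ℤ)+1 = 0 then 1 else 0) + (if -(n:ℤ)+1 = 0 then 1 else 0))) = 1/8 := by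
      have e1 : ¬ ((1:ℤ) = 0) := by omega
      have e2 : ¬ ((1:ℤ)+1 = 0) := by omega
      have e3 : ((-1:ℤ)+1 = 0) := by omega
      have e4 : ¬ ((n:ℤ)+1 = 0) := by omega
      have e5 : ¬ (-(n:ℤ)+1 = 0) := by omega
      rw [if_neg e1, if_neg e2, if_pos e3, if_neg e4, if_neg e5]
      norm_num
    rw [hifs] at this
    exact Complex.ofReal_inj.mp (by rw [this]; norm_num)
  have hB2 : Complex.normSq (c (n:ℤ)) = 1/8 := by
    have := key (n:ℤ)
    rw [Complex.mul_conj] at this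
    have hifs : ((if (n:ℤ) = 0 then (1:ℂ) else 0)
        + (1/8) * ((if 1+(n:ℤ) = 0 then 1 else 0) + (if -1+(n:ℤ) = 0 then 1 else 0))
        + (1/8) * ((if (n:ℤ)+(n:ℤ) = 0 then 1 else 0) + (if -(n:ℤ)+(n:ℤ) = 0 then 1 else 0)))
        = 1/8 := by
      have e1 : ¬ ((n:ℤ) = 0) := by omega
      have e2 : ¬ ((1:ℤ)+(n:ℤ) = 0) := by omega
      have e3 : ¬ ((-1:ℤ)+(n:ℤ) = 0) := by omega
      have e4 : ¬ ((n:ℤ)+(n:ℤ) = 0) := by omega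
      have e5 : (-(n:ℤ)+(n:ℤ) = 0) := by omega
      rw [if_neg e1, if_neg e2, if_neg e3, if_neg e4, if_pos e5]
      norm_num
    rw [hifs] at this
    exact Complex.ofReal_inj.mp (by rw [this]; norm_num)
  have hzero : ∀ d : ℤ, d ≠ 0 → d ≠ 1 → d ≠ -1 → d ≠ (n:ℤ) → d ≠ -(n:ℤ) → c d = 0 := by
    intro d h0 h1 h1' hnn hnn'
    have := key d
    rw [Complex.mul_conj] at this
    have e1 : ¬ (d = 0) := h0
    have e2 : ¬ ((1:ℤ)+d = 0) := by omega
    have e3 : ¬ ((-1:ℤ)+d = 0) := by omega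
    have e4 : ¬ ((n:ℤ)+d = 0) := by omega
    have e5 : ¬ (-(n:ℤ)+d = 0) := by omega
    rw [if_neg e1, if_neg e2, if_neg e3, if_neg e4, if_neg e5] at this
    norm_num at this
    exact this
  -- Fejér kernel argument
  have hπ : (0:ℝ) < π := pi_pos
  have hn0 : (0:ℝ) < (n:ℝ) := by
    have : (0:ℕ) < n := by omega
    exact_mod_cast this
  set A : ℝ := ‖c 1‖ with hAdef
  set B : ℝ := ‖c (n:ℤ)‖ with hBdef
  set φ : ℝ := Complex.arg (c 1) with hφdef
  set ψ : ℝ := Complex.arg (c (n:ℤ)) with hψdef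
  set α : ℝ := φ / (2*π) with hαdef
  set β : ℝ := ψ / (2*π) with hβdef
  set tr : ℝ := β - 1/2 - (n:ℝ) * (α - 1/2) with htrdef
  set jr : ℤ := round tr with hjrdef
  set x0 : ℝ := (β - 1/2 - (jr:ℝ)) / (n:ℝ) with hx0def
  set m : ℕ := n^2 with hmdef
  have hnm : n ≤ m := by
    rw [hmdef]
    nlinarith [sq_nonneg n]
  have hm1 : 1 ≤ m := by omega
  set h : ℤ → ℂ := fun d => fourier (-d) ((x0 : ℝ) : AddCircle (1:ℝ)) * c d with hhdef
  have hpos0 : 0 ≤ ∫ x, Complex.normSq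
      (∑ j ∈ Finset.range m, fourier (j:ℤ) (x - ((x0:ℝ) : AddCircle (1:ℝ)))) ∂ρ :=
    integral_nonneg fun x => Complex.normSq_nonneg _
  have hpt : ∀ x : AddCircle (1:ℝ),
      ((Complex.normSq (∑ j ∈ Finset.range m,
          fourier (j:ℤ) (x - ((x0:ℝ) : AddCircle (1:ℝ)))) : ℝ) : ℂ)
      = ∑ l ∈ Finset.range m, ∑ j ∈ Finset.range m,
          fourier (-((j:ℤ) - l)) ((x0:ℝ) : AddCircle (1:ℝ)) * fourier ((j:ℤ) - l) x := by
    intro x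
    rw [← Complex.mul_conj, map_sum, Finset.sum_mul_sum, Finset.sum_comm]
    refine Finset.sum_congr rfl fun l _ => Finset.sum_congr rfl fun j _ => ?_
    rw [← fourier_neg, ← fourier_add,
      show (j:ℤ) + -(l:ℤ) = (j:ℤ) - l from by ring, fourier_sub_split]
    ring
  have hint : ∫ x, ((Complex.normSq (∑ j ∈ Finset.range m,
        fourier (j:ℤ) (x - ((x0:ℝ) : AddCircle (1:ℝ)))) : ℝ) : ℂ) ∂ρ
      = ∑ l ∈ Finset.range m, ∑ j ∈ Finset.range m, h ((j:ℤ) - l) := by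
    simp_rw [hpt]
    rw [integral_finset_sum _ (fun l _ => integrable_finset_sum _
      (fun j _ => (intf ρ _).const_mul _))]
    refine Finset.sum_congr rfl fun l _ => ?_
    rw [integral_finset_sum _ (fun j _ => (intf ρ _).const_mul _)]
    refine Finset.sum_congr rfl fun j _ => ?_
    rw [integral_const_mul]
  have hs : ∀ d : ℤ, d ≠ 0 → d ≠ 1 → d ≠ -1 → d ≠ (n:ℤ) → d ≠ -(n:ℤ) → h d = 0 :=
    fun d h0 h1 h2 h3 h4 => by
      simp only [hhdef]; rw [hzero d h0 h1 h2 h3 h4, mul_zero]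
  have hds := double_sum_support n (by omega) m hnm h hs
  have hh0 : h 0 = 1 := by
    simp only [hhdef]
    rw [neg_zero, hc0, mul_one]
    exact fourier_zero
  have hconj : ∀ d : ℤ, h (-d) = starRingEnd ℂ (h d) := by
    intro d
    simp only [hhdef]
    rw [map_mul, neg_neg]
    congr 1
    · rw [fourier_neg, Complex.conj_conj]
    · simp only [hcdef]
      exact coeff_neg ρ d
  have hre1 : h 1 + h (-1) = ((2 * (h 1).re : ℝ) : ℂ) := by
    rw [show (-1 : ℤ) = -(1:ℤ) from rfl, hconj 1, Complex.add_conj]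
  have hren : h (n:ℤ) + h (-(n:ℤ)) = ((2 * (h (n:ℤ)).re : ℝ) : ℂ) := by
    rw [hconj, Complex.add_conj]
  have hcast : ((∫ x, Complex.normSq (∑ j ∈ Finset.range m,
        fourier (j:ℤ) (x - ((x0:ℝ) : AddCircle (1:ℝ)))) ∂ρ : ℝ) : ℂ)
      = (((m:ℝ) + ((m:ℝ)-1)*(2*(h 1).re) + ((m:ℝ)-(n:ℝ))*(2*(h (n:ℤ)).re) : ℝ) : ℂ) := by
    rw [show ((∫ x, Complex.normSq (∑ j ∈ Finset.range m,
        fourier (j:ℤ) (x - ((x0:ℝ) : AddCircle (1:ℝ)))) ∂ρ : ℝ) : ℂ)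
      = ∫ x, ((Complex.normSq (∑ j ∈ Finset.range m,
        fourier (j:ℤ) (x - ((x0:ℝ) : AddCircle (1:ℝ)))) : ℝ) : ℂ) ∂ρ from integral_ofReal.symm]
    rw [hint, hds, hh0, hre1, hren, nsmul_eq_mul, nsmul_eq_mul, nsmul_eq_mul,
      Nat.cast_sub hm1, Nat.cast_sub hnm]
    push_cast
    ring
  have hreal : ∫ x, Complex.normSq (∑ j ∈ Finset.range m,
        fourier (j:ℤ) (x - ((x0:ℝ) : AddCircle (1:ℝ)))) ∂ρ
      = (m:ℝ) + ((m:ℝ)-1)*(2*(h 1).re) + ((m:ℝ)-(n:ℝ))*(2*(h (n:ℤ)).re) :=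
    Complex.ofReal_inj.mp hcast
  -- real parts of h 1 and h n
  have hfc : ∀ k : ℤ, (h k).re
      = ‖c k‖ * Real.cos (Complex.arg (c k) - 2*π*(k:ℝ)*x0) := by
    intro k
    simp only [hhdef]
    conv_lhs => rw [← Complex.norm_mul_exp_arg_mul_I (c k)]
    rw [fourier_coe_apply]
    have hexp : Complex.exp (2 * ↑π * Complex.I * ↑(-k) * ↑x0 / ↑(1:ℝ))
          * (↑‖c k‖ * Complex.exp (↑(Complex.arg (c k)) * Complex.I))
        = ↑‖c k‖
          * Complex.exp (↑(Complex.arg (c k) - 2*π*(k:ℝ)*x0) * Complex.I) := by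
      rw [mul_comm, mul_assoc, ← Complex.exp_add]
      congr 2
      push_cast
      ring
    rw [hexp, Complex.re_ofReal_mul, Complex.exp_ofReal_mul_I_re]
  -- evaluate cos at frequency n
  have hψeq : ψ = 2*π*β := by rw [hβdef]; field_simp
  have hφeq : φ = 2*π*α := by rw [hαdef]; field_simp
  have hcosn : Real.cos (ψ - 2*π*((n:ℤ):ℝ)*x0) = -1 := by
    have hx : ψ - 2*π*((n:ℤ):ℝ)*x0 = π + (jr:ℝ) * (2*π) := by
      rw [hψeq, hx0def]
      push_cast
      field_simp
      ring
    rw [hx, Real.cos_add_int_mul_two_pi, Real.cos_pi]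
  -- bound cos at frequency 1
  set δ : ℝ := x0 - (α - 1/2) with hδdef
  have hδb : |δ| ≤ 1/(2*(n:ℝ)) := by
    have hδeq : δ = (tr - (jr:ℝ))/(n:ℝ) := by
      rw [hδdef, hx0def, htrdef]
      field_simp
      ring
    rw [hδeq, abs_div, abs_of_pos hn0]
    have h12 : |tr - (jr:ℝ)| ≤ 1/2 := abs_sub_round tr
    rw [show 1/(2*(n:ℝ)) = (1/2)/(n:ℝ) from by ring]
    gcongr
  have hδsq : (2*π*δ)^2 ≤ 10/(n:ℝ)^2 := arith_dsq (n:ℝ) δ hn0 hδb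
  have hcos1 : Real.cos (φ - 2*π*((1:ℤ):ℝ)*x0) ≤ -(1 - 5/(n:ℝ)^2) := by
    have hx : φ - 2*π*((1:ℤ):ℝ)*x0 = π - 2*π*δ := by
      rw [hφeq, hδdef]
      push_cast
      ring
    rw [hx, Real.cos_pi_sub]
    have h1 := Real.one_sub_sq_div_two_le_cos (x := 2*π*δ)
    have h2 : 10/(n:ℝ)^2 = 2*(5/(n:ℝ)^2) := by ring
    linarith [hδsq, h1, h2.le, h2.ge]
  -- assemble the contradiction
  have hA0 : 0 ≤ A := norm_nonneg _
  have hB0 : 0 ≤ B := norm_nonneg _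
  have hA2' : A^2 = 1/8 := by
    rw [hAdef, ← Complex.normSq_eq_norm_sq, hA2]
  have hB2' : B^2 = 1/8 := by
    rw [hBdef, ← Complex.normSq_eq_norm_sq, hB2]
  have hre1v : (h 1).re ≤ A * (-(1 - 5/(n:ℝ)^2)) := by
    have := hfc 1
    rw [this]
    rw [← hAdef, ← hφdef]
    exact mul_le_mul_of_nonneg_left hcos1 hA0
  have hrenv : (h (n:ℤ)).re = -B := by
    rw [hfc (n:ℤ), ← hBdef, ← hψdef, hcosn]
    ring
  have hmr : (m:ℝ) = (n:ℝ)^2 := by rw [hmdef]; push_cast; ring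
  have hnr : (10:ℝ) ≤ (n:ℝ) := by exact_mod_cast hn
  exact arith_final (n:ℝ) A B ((h 1).re) ((h (n:ℤ)).re) _ hnr hA2' hB2' hA0 hB0
    hre1v hrenv hpos0 (by rw [hreal, hmr])
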